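/- Let m > 0 be a real number. The function F₂(x) = x^x / (x+m)^{x+m} is strictly decreasing on (0,∞); that is, for all real numbers x, y with 0 < x < y, one has y^y / (y+m)^{y+m} < x^x / (x+m)^{x+m}. -/

import Mathlib

/-- **Proposition 2 (Wang).** For a real number `m > 0`, the function
`F₂(x) = x^x / (x+m)^(x+m)` (real powers) is strictly decreasing on `(0, ∞)`. -/
theorem prop_F2_strictAnti (m : ℝ) (hm : 0 < m) (x y : ℝ)
    (hx : 0 < x) (hxy : x < y) :
    y ^ y / (y + m) ^ (y + m) < x ^ x / (x + m) ^ (x + m) := by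
  set f : ℝ → ℝ := fun t => t * Real.log t - (t + m) * Real.log (t + m) with hf
  have hderiv : ∀ t ∈ Set.Ioi (0:ℝ),
      HasDerivAt f (Real.log t - Real.log (t + m)) t := by
    intro t ht
    have ht' : (0:ℝ) < t := ht
    have h1 : HasDerivAt (fun u : ℝ => u * Real.log u) (Real.log t + 1) t :=
      Real.hasDerivAt_mul_log ht'.ne'
    have h2 : HasDerivAt (fun u : ℝ => (u + m) * Real.log (u + m))
        ((Real.log (t + m) + 1) * 1) t := by
      exact (Real.hasDerivAt_mul_log (by linarith : t + m ≠ 0)).comp t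
        ((hasDerivAt_id t).add_const m)
    have : HasDerivAt f (Real.log t + 1 - (Real.log (t + m) + 1) * 1) t := h1.sub h2
    convert this using 1
    ring
  have hanti : StrictAntiOn f (Set.Ioi 0) := by
    apply strictAntiOn_of_deriv_neg (convex_Ioi 0)
    · exact fun t ht => (hderiv t ht).continuousAt.continuousWithinAt
    · intro t ht
      rw [interior_Ioi] at ht
      rw [(hderiv t ht).deriv]
      have : Real.log t < Real.log (t + m) := Real.log_lt_log ht (by linarith)
      linarith
  have hy : (0:ℝ) < y := hx.trans hxy
  have key : f y < f x := hanti hx (Set.mem_Ioi.mpr hy) hxy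
  have hrw : ∀ t : ℝ, 0 < t → t ^ t / (t + m) ^ (t + m) = Real.exp (f t) := by
    intro t ht
    rw [Real.rpow_def_of_pos ht, Real.rpow_def_of_pos (by linarith),
      ← Real.exp_sub, hf]
    ring_nf
  rw [hrw x hx, hrw y hy]
  exact Real.exp_lt_exp.mpr key
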